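/- arXiv:1305.3682 — 4 statements merged into one kernel-verified Lean document; each statement's English description precedes it below -/
import Mathlib

section
/- The function f(R) = (π³ / (2√(R²−1))) · (R²(3 log 2 − 1) + 2 − 2/R²), defined for R > 1, attains its minimum value at R = √2, and the minimum value equals π³(6 log 2 − 1)/2. -/
open Real

theorem torus_energy_min :
    (∀ R : ℝ, 1 < R →
      (π^3 / (2 * Real.sqrt (R^2 - 1))) * (R^2 * (3 * Real.log 2 - 1) + 2 - 2 / R^2) ≥
      (π^3 / (2 * Real.sqrt ((Real.sqrt 2)^2 - 1))) *
        ((Real.sqrt 2)^2 * (3 * Real.log 2 - 1) + 2 - 2 / (Real.sqrt 2)^2)) ∧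
    (π^3 / (2 * Real.sqrt ((Real.sqrt 2)^2 - 1))) *
        ((Real.sqrt 2)^2 * (3 * Real.log 2 - 1) + 2 - 2 / (Real.sqrt 2)^2)
      = π^3 * (6 * Real.log 2 - 1) / 2 := by
  have h2 : (Real.sqrt 2)^2 = 2 := Real.sq_sqrt (by norm_num)
  have hs1 : Real.sqrt ((Real.sqrt 2)^2 - 1) = 1 := by
    rw [h2]; norm_num
  have hc : (1:ℝ)/2 ≤ 3 * Real.log 2 - 1 := by
    have := Real.log_two_gt_d9
    linarith
  constructor
  · intro R hR
    rw [hs1, h2]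
    set c : ℝ := 3 * Real.log 2 - 1 with hcdef
    have hR0 : (0:ℝ) < R := by linarith
    have hR2 : (1:ℝ) < R^2 := by nlinarith
    have ht0 : (0:ℝ) < R^2 - 1 := by linarith
    set t : ℝ := Real.sqrt (R^2 - 1) with htdef
    have ht : 0 < t := Real.sqrt_pos.mpr ht0
    have ht2 : t^2 = R^2 - 1 := Real.sq_sqrt (le_of_lt ht0)
    have hpi : (0:ℝ) < π^3 := by positivity
    -- key inequality: R^2*c + 2 - 2/R^2 ≥ (2*c+1)*t
    have key : R^2 * c + 2 - 2 / R^2 ≥ (2 * c + 1) * t := by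
      have hR2pos : (0:ℝ) < R^2 := by positivity
      have ha : R^2 * (R^2 * c + 2 - 2 / R^2) = c * R^4 + 2 * R^2 - 2 := by
        field_simp
      -- work with A = c*R^4 + 2*R^2 - 2 and B = (2c+1)*t*R^2
      have hApos : (0:ℝ) < c * R^4 + 2 * R^2 - 2 := by
        nlinarith [mul_le_mul_of_nonneg_right hc (by positivity : (0:ℝ) ≤ R^4), sq_nonneg (R^2 - 1), hR2]
      have hBpos : (0:ℝ) < (2 * c + 1) * t * R^2 := by positivity
      have hsq : (c * R^4 + 2 * R^2 - 2)^2 ≥ ((2 * c + 1) * t * R^2)^2 := by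
        have hfac : (0:ℝ) ≤ c^2 * R^4 - R^2 + 1 := by nlinarith [sq_nonneg (R^2 - 2), sq_nonneg (R^2/2 - 1), sq_nonneg (c - 1/2)]
        nlinarith [sq_nonneg (R^2 - 2), mul_nonneg (sq_nonneg (R^2 - 2)) hfac]
      have hAB : c * R^4 + 2 * R^2 - 2 ≥ (2 * c + 1) * t * R^2 := by
        nlinarith [hsq, hApos, hBpos]
      rw [ge_iff_le, ← mul_le_mul_iff_right₀ hR2pos, ha]
      calc R^2 * ((2 * c + 1) * t) = (2 * c + 1) * t * R^2 := by ring
        _ ≤ c * R^4 + 2 * R^2 - 2 := hAB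
    -- finish
    have h2t : 0 < 2 * t := by linarith
    rw [ge_iff_le, div_mul_eq_mul_div, div_mul_eq_mul_div, div_le_div_iff₀ (by norm_num) h2t]
    nlinarith [mul_le_mul_of_nonneg_left (key : (2 * c + 1) * t ≤ R^2 * c + 2 - 2 / R^2) hpi.le]
  · rw [hs1, h2]
    ring
end

section
/- ∫₀^{π/2} ((π/2 − θ)·sin θ/cos³θ − sin²θ/cos²θ) dθ = π/4. -/
open Real MeasureTheory Filter Set intervalIntegral

noncomputable def Gaux (x : ℝ) : ℝ :=
  (π/2 - x) / (2 * Real.cos x ^ 2) - Real.sin x / (2 * Real.cos x) + x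

noncomputable def faux (θ : ℝ) : ℝ :=
  (π/2 - θ) * Real.sin θ / (Real.cos θ)^3 - (Real.sin θ)^2 / (Real.cos θ)^2

lemma cos_pos_of_mem {x : ℝ} (hx : x ∈ Ico (0:ℝ) (π/2)) : 0 < Real.cos x :=
  Real.cos_pos_of_mem_Ioo ⟨by linarith [hx.1, Real.pi_pos], hx.2⟩

lemma hasDerivAt_Gaux {x : ℝ} (hx : x ∈ Ico (0:ℝ) (π/2)) :
    HasDerivAt Gaux (faux x) x := by
  have hc : Real.cos x ≠ 0 := (cos_pos_of_mem hx).ne'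
  have hnum : HasDerivAt (fun x : ℝ => π/2 - x) (-1) x := by
    simpa using (hasDerivAt_id x).const_sub (π/2)
  have h1 : HasDerivAt (fun x => (π/2 - x) / (2 * Real.cos x ^ 2))
      (((-1) * (2 * Real.cos x ^ 2) - (π/2 - x) * (2 * (2 * Real.cos x ^ 1 * (-Real.sin x))))
        / (2 * Real.cos x ^ 2)^2) x := by
    exact HasDerivAt.div hnum
      (((Real.hasDerivAt_cos x).pow 2).const_mul 2)
      (by positivity)
  have h2 : HasDerivAt (fun x => Real.sin x / (2 * Real.cos x))
      ((Real.cos x * (2 * Real.cos x) - Real.sin x * (2 * (-Real.sin x)))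
        / (2 * Real.cos x)^2) x := by
    exact HasDerivAt.div (Real.hasDerivAt_sin x) ((Real.hasDerivAt_cos x).const_mul 2)
      (by simp [hc])
  have := (h1.sub h2).add (hasDerivAt_id x)
  refine this.congr_deriv (Eq.symm ?_)
  have hsc := Real.sin_sq_add_cos_sq x
  rw [faux]
  field_simp
  linear_combination (-(Real.cos x)) * hsc

lemma faux_bounds {θ : ℝ} (hθ : θ ∈ Ioo (0:ℝ) (π/2)) : faux θ ∈ Icc (0:ℝ) 1 := by
  have hc : 0 < Real.cos θ := Real.cos_pos_of_mem_Ioo ⟨by linarith [hθ.1, Real.pi_pos], hθ.2⟩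
  have hs : 0 < Real.sin θ := Real.sin_pos_of_pos_of_lt_pi hθ.1 (by linarith [hθ.2, Real.pi_pos])
  have hkey : π/2 - θ ≤ Real.cos θ / Real.sin θ := by
    have h1 : π/2 - θ < Real.tan (π/2 - θ) :=
      Real.lt_tan (by linarith [hθ.2]) (by linarith [hθ.1])
    rw [Real.tan_pi_div_two_sub, Real.tan_eq_sin_div_cos] at h1
    rw [inv_div] at h1
    linarith
  have hlow : Real.sin θ * Real.cos θ ≤ π/2 - θ := by
    have h1 : Real.sin (π/2 - θ) ≤ π/2 - θ := Real.sin_le (by linarith [hθ.2])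
    rw [Real.sin_pi_div_two_sub] at h1
    nlinarith [Real.sin_le_one θ, hs.le, hc.le]
  have hsc := Real.sin_sq_add_cos_sq θ
  constructor
  · rw [faux, sub_nonneg, div_le_div_iff₀ (by positivity) (by positivity)]
    nlinarith [mul_le_mul_of_nonneg_right hlow (by positivity : (0:ℝ) ≤ Real.sin θ * Real.cos θ ^ 2)]
  · rw [faux]
    rw [div_sub_div _ _ (by positivity) (by positivity), div_le_one (by positivity)]
    have h2 : (π/2 - θ) * Real.sin θ ≤ Real.cos θ := by
      rw [← div_mul_cancel₀ (Real.cos θ) hs.ne']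
      exact mul_le_mul_of_nonneg_right hkey hs.le
    have h2c : (π/2 - θ) * Real.sin θ * Real.cos θ ^ 2 ≤ Real.cos θ ^ 3 := by
      nlinarith [mul_le_mul_of_nonneg_right h2 (sq_nonneg (Real.cos θ))]
    have h5 : Real.cos θ ^ 3 = Real.cos θ ^ 3 * Real.sin θ ^ 2 + Real.cos θ ^ 3 * Real.cos θ ^ 2 := by
      linear_combination (-(Real.cos θ ^ 3)) * hsc
    nlinarith

lemma faux_norm_le {θ : ℝ} (hθ : θ ∈ Icc (0:ℝ) (π/2)) : ‖faux θ‖ ≤ 1 := by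
  rcases eq_or_lt_of_le hθ.1 with h0 | h0
  · simp [faux, ← h0]
  rcases eq_or_lt_of_le hθ.2 with h2 | h2
  · simp [faux, h2]
  have := faux_bounds ⟨h0, h2⟩
  rw [Real.norm_eq_abs, abs_le]
  exact ⟨by linarith [this.1], this.2⟩

lemma faux_intervalIntegrable : IntervalIntegrable faux volume 0 (π/2) := by
  rw [intervalIntegrable_iff_integrableOn_Icc_of_le (by positivity)]
  apply Measure.integrableOn_of_bounded (M := 1) (by simp)
  · unfold faux
    exact ((((measurable_const.sub measurable_id).mul Real.measurable_sin).div
      (Real.measurable_cos.pow_const 3)).sub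
      ((Real.measurable_sin.pow_const 2).div (Real.measurable_cos.pow_const 2))).aestronglyMeasurable
  · rw [ae_restrict_iff' measurableSet_Icc]
    exact ae_of_all _ fun x hx => faux_norm_le hx

lemma Gaux_bounds {x : ℝ} (hx : x ∈ Ioo (0:ℝ) (π/2)) :
    x ≤ Gaux x ∧ Gaux x ≤ x + Real.cos x / (2 * Real.sin x) := by
  have hc : 0 < Real.cos x := Real.cos_pos_of_mem_Ioo ⟨by linarith [hx.1, Real.pi_pos], hx.2⟩
  have hs : 0 < Real.sin x := Real.sin_pos_of_pos_of_lt_pi hx.1 (by linarith [hx.2, Real.pi_pos])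
  have hsc := Real.sin_sq_add_cos_sq x
  have hkey : π/2 - x ≤ Real.cos x / Real.sin x := by
    have h1 : π/2 - x < Real.tan (π/2 - x) :=
      Real.lt_tan (by linarith [hx.2]) (by linarith [hx.1])
    rw [Real.tan_pi_div_two_sub, Real.tan_eq_sin_div_cos, inv_div] at h1
    linarith
  have hlow : Real.sin x * Real.cos x ≤ π/2 - x := by
    have h1 : Real.sin (π/2 - x) ≤ π/2 - x := Real.sin_le (by linarith [hx.2])
    rw [Real.sin_pi_div_two_sub] at h1
    nlinarith [Real.sin_le_one x]
  constructor
  · rw [Gaux, ← sub_nonneg]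
    have : (π/2 - x) / (2 * Real.cos x ^ 2) - Real.sin x / (2 * Real.cos x) + x - x
        = ((π/2 - x) - Real.sin x * Real.cos x) / (2 * Real.cos x ^ 2) := by
      field_simp; ring
    rw [this]
    exact div_nonneg (by linarith) (by positivity)
  · rw [Gaux]
    have h2 : (π/2 - x) / (2 * Real.cos x ^ 2) - Real.sin x / (2 * Real.cos x)
        ≤ Real.cos x / (2 * Real.sin x) := by
      rw [div_sub_div _ _ (by positivity) (by positivity),
        div_le_div_iff₀ (by positivity) (by positivity)]
      have h3 : (π/2 - x) * Real.sin x ≤ Real.cos x := by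
        rw [← div_mul_cancel₀ (Real.cos x) hs.ne']
        exact mul_le_mul_of_nonneg_right hkey hs.le
      nlinarith
    linarith

theorem integral_aux1 :
    ∫ θ in (0:ℝ)..(π/2),
        ((π/2 - θ) * Real.sin θ / (Real.cos θ)^3 - (Real.sin θ)^2 / (Real.cos θ)^2)
      = π / 4 := by
  have hπ : (0:ℝ) < π/2 := by positivity
  have hII := faux_intervalIntegrable
  have hIcc : IntegrableOn faux (uIcc 0 (π/2)) volume := by
    rw [uIcc_of_le hπ.le]
    rw [intervalIntegrable_iff_integrableOn_Icc_of_le hπ.le] at hII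
    exact hII
  have hcont := intervalIntegral.continuousOn_primitive_interval (a := (0:ℝ)) hIcc
  have hmem : (π/2 : ℝ) ∈ uIcc (0:ℝ) (π/2) := right_mem_uIcc
  have hT1 : Tendsto (fun x => ∫ t in (0:ℝ)..x, faux t) (nhdsWithin (π/2) (Iio (π/2)))
      (nhds (∫ t in (0:ℝ)..(π/2), faux t)) := by
    have := (hcont (π/2) hmem).tendsto
    rw [uIcc_of_le hπ.le] at this
    have h2 := this.mono_left (nhdsWithin_mono _ Ico_subset_Icc_self)
    rwa [nhdsWithin_Ico_eq_nhdsLT hπ] at h2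
  have hEv : ∀ᶠ x in nhdsWithin (π/2) (Iio (π/2)), x ∈ Ioo (0:ℝ) (π/2) := by
    have : Ioo (0:ℝ) (π/2) ∈ nhdsWithin (π/2) (Iio (π/2)) :=
      mem_nhdsWithin.2 ⟨Ioi 0, isOpen_Ioi, hπ, fun x hx => ⟨hx.1, hx.2⟩⟩
    exact this
  have hG0 : Gaux 0 = π/4 := by
    simp [Gaux]
    ring
  have hEq : ∀ᶠ x in nhdsWithin (π/2) (Iio (π/2)),
      (∫ t in (0:ℝ)..x, faux t) = Gaux x - Gaux 0 := by
    filter_upwards [hEv] with x hx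
    apply intervalIntegral.integral_eq_sub_of_hasDerivAt
    · intro t ht
      rw [uIcc_of_le hx.1.le] at ht
      exact hasDerivAt_Gaux ⟨ht.1, lt_of_le_of_lt ht.2 hx.2⟩
    · refine hII.mono_set ?_
      rw [uIcc_of_le hx.1.le, uIcc_of_le hπ.le]
      exact Icc_subset_Icc le_rfl hx.2.le
  have hGlim : Tendsto Gaux (nhdsWithin (π/2) (Iio (π/2))) (nhds (π/2)) := by
    have hlo : Tendsto (fun x : ℝ => x) (nhdsWithin (π/2) (Iio (π/2))) (nhds (π/2)) :=
      tendsto_id.mono_left nhdsWithin_le_nhds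
    have hhi : Tendsto (fun x : ℝ => x + Real.cos x / (2 * Real.sin x))
        (nhdsWithin (π/2) (Iio (π/2))) (nhds (π/2)) := by
      have : ContinuousAt (fun x : ℝ => x + Real.cos x / (2 * Real.sin x)) (π/2) := by
        apply continuousAt_id.add
        apply ContinuousAt.div (Real.continuous_cos.continuousAt)
          (by fun_prop)
        simp
      have h2 := this.tendsto.mono_left (nhdsWithin_le_nhds (s := Iio (π/2)))
      simpa using h2
    refine tendsto_of_tendsto_of_tendsto_of_le_of_le' hlo hhi ?_ ?_
    · filter_upwards [hEv] with x hx; exact (Gaux_bounds hx).1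
    · filter_upwards [hEv] with x hx; exact (Gaux_bounds hx).2
  have hT2 : Tendsto (fun x => ∫ t in (0:ℝ)..x, faux t) (nhdsWithin (π/2) (Iio (π/2)))
      (nhds (π/4)) := by
    have h := hGlim.sub_const (Gaux 0)
    have h4 : π/2 - Gaux 0 = π/4 := by rw [hG0]; ring
    rw [h4] at h
    exact h.congr' (hEq.mono fun x hx => hx.symm)
  have : (∫ t in (0:ℝ)..(π/2), faux t) = π/4 := tendsto_nhds_unique hT1 hT2
  exact this
end

section
/- ∫₀^{π/2} ((π/2 − θ)·sin θ/cos²θ − sin²θ/cos θ) dθ = (4 − π)/2. -/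
open Real MeasureTheory Set Filter Topology

lemma aux_cos_lb {u : ℝ} (hu : 0 ≤ u) : 1 - u^2/2 ≤ Real.cos u := by
  have h1 : Real.sin (u/2) ^ 2 = 1/2 - Real.cos (2 * (u/2)) / 2 :=
    Real.sin_sq_eq_half_sub (u/2)
  have h4 : Real.sin (u/2)^2 ≤ (u/2)^2 := Real.sin_sq_le_sq
  have : 2 * (u/2) = u := by ring
  rw [this] at h1
  nlinarith

lemma aux_bound {u : ℝ} (hu : 0 < u) (hu' : u ≤ π/2) :
    0 ≤ u * Real.cos u / (Real.sin u)^2 - (Real.cos u)^2 / Real.sin u ∧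
    u * Real.cos u / (Real.sin u)^2 - (Real.cos u)^2 / Real.sin u ≤ 3 := by
  have hpi : 0 < π := Real.pi_pos
  have hs : 0 < Real.sin u := Real.sin_pos_of_pos_of_lt_pi hu (by linarith)
  have hc : 0 ≤ Real.cos u := Real.cos_nonneg_of_mem_Icc ⟨by linarith, hu'⟩
  have hsu : Real.sin u ≤ u := Real.sin_le hu.le
  have hc1 : Real.cos u ≤ 1 := Real.cos_le_one u
  have key : u * Real.cos u / (Real.sin u)^2 - (Real.cos u)^2 / Real.sin u
      = Real.cos u * (u - Real.cos u * Real.sin u) / (Real.sin u)^2 := by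
    field_simp
  have hnum : 0 ≤ u - Real.cos u * Real.sin u := by nlinarith
  rw [key]
  constructor
  · exact div_nonneg (mul_nonneg hc hnum) (sq_nonneg _)
  · rw [div_le_iff₀ (by positivity)]
    rcases le_or_gt u 1 with h1 | h1
    · have hcube : u - u^3/4 < Real.sin u := by nlinarith [Real.sin_gt_sub_cube hu, pow_pos hu 3]
      have hclb : 1 - u^2/2 ≤ Real.cos u := aux_cos_lb hu.le
      have hs3 : 3/4 * u ≤ Real.sin u := by nlinarith
      nlinarith [mul_nonneg hc hs.le, sq_nonneg u, sq_nonneg (u*u)]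
    · have hpi2 : 1 ≤ π/2 := by nlinarith [Real.pi_gt_three]
      have hsin1 : Real.sin 1 ≤ Real.sin u :=
        Real.strictMonoOn_sin.monotoneOn ⟨by linarith, hpi2⟩ ⟨by linarith, hu'⟩ h1.le
      have h34 : (3:ℝ)/4 < Real.sin 1 := by
        nlinarith [Real.sin_gt_sub_cube one_pos]
      have hpil : π < 3.15 := Real.pi_lt_d2
      nlinarith [mul_nonneg hc hs.le]

theorem integral_aux2 :
    ∫ θ in (0:ℝ)..(π/2),
        ((π/2 - θ) * Real.sin θ / (Real.cos θ)^2 - (Real.sin θ)^2 / Real.cos θ)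
      = (4 - π) / 2 := by
  have hpi : 0 < π := Real.pi_pos
  have hab : (0:ℝ) < π/2 := by linarith
  set f : ℝ → ℝ := fun θ =>
    (π/2 - θ) * Real.sin θ / (Real.cos θ)^2 - (Real.sin θ)^2 / Real.cos θ with hf
  set F : ℝ → ℝ := fun θ => (π/2 - θ) / Real.cos θ + Real.sin θ with hFdef
  -- rewrite f in terms of u = π/2 - θ
  have hrw : ∀ θ : ℝ, f θ =
      (π/2 - θ) * Real.cos (π/2 - θ) / (Real.sin (π/2 - θ))^2
        - (Real.cos (π/2 - θ))^2 / Real.sin (π/2 - θ) := by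
    intro θ
    simp only [hf, Real.cos_pi_div_two_sub, Real.sin_pi_div_two_sub]
  have hderiv : ∀ x ∈ Ioo (0:ℝ) (π/2), HasDerivAt F (f x) x := by
    intro x hx
    have hc : 0 < Real.cos x := Real.cos_pos_of_mem_Ioo ⟨by linarith [hx.1], hx.2⟩
    have h1 : HasDerivAt (fun θ : ℝ => π/2 - θ) (-1) x :=
      (hasDerivAt_id x).const_sub (π/2)
    have h2 := h1.div (Real.hasDerivAt_cos x) hc.ne'
    have h3 := h2.add (Real.hasDerivAt_sin x)
    refine h3.congr_deriv ?_
    have hsc : Real.sin x ^ 2 = 1 - Real.cos x ^ 2 := Real.sin_sq x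
    simp only [hf]
    rw [hsc]
    field_simp
    ring
  have hint : IntervalIntegrable f volume 0 (π/2) := by
    rw [intervalIntegrable_iff_integrableOn_Ioc_of_le hab.le]
    have hmeas : Measurable f := by
      apply Measurable.sub <;> apply Measurable.div <;> fun_prop
    apply (integrable_const (3:ℝ)).mono' (hmeas.aestronglyMeasurable.restrict)
    · filter_upwards [ae_restrict_mem measurableSet_Ioc] with θ hθ
      rcases eq_or_lt_of_le hθ.2 with heq | hlt
      · simp [hf, heq]
      · have hb := aux_bound (u := π/2 - θ) (by linarith) (by linarith [hθ.1])
        rw [Real.norm_eq_abs, abs_le]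
        rw [hrw θ] at *
        constructor <;> [linarith [hb.1]; linarith [hb.2]]
  have ha : Tendsto F (𝓝[>] (0:ℝ)) (𝓝 (π/2)) := by
    have hcont : ContinuousAt F 0 := by
      apply ContinuousAt.add
      · exact (continuousAt_const.sub continuousAt_id).div Real.continuous_cos.continuousAt
          (by simp)
      · exact Real.continuous_sin.continuousAt
    have : F 0 = π/2 := by simp [hFdef]
    rw [← this]
    exact hcont.continuousWithinAt.tendsto
  have hb : Tendsto F (𝓝[<] (π/2)) (𝓝 2) := by
    -- F θ = G (π/2 - θ) where G u = u / sin u + cos u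
    have hFG : F = (fun u => u / Real.sin u + Real.cos u) ∘ (fun θ => π/2 - θ) := by
      funext θ
      simp [hFdef, Real.sin_pi_div_two_sub, Real.cos_pi_div_two_sub]
    have hmap : Tendsto (fun θ : ℝ => π/2 - θ) (𝓝[<] (π/2)) (𝓝[>] (0:ℝ)) := by
      apply tendsto_nhdsWithin_of_tendsto_nhds_of_eventually_within
      · have hcts : Continuous (fun θ : ℝ => π/2 - θ) := by continuity
        have h0 : Tendsto (fun θ : ℝ => π/2 - θ) (𝓝 (π/2)) (𝓝 0) := by
          simpa using hcts.tendsto (π/2)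
        exact h0.mono_left nhdsWithin_le_nhds
      · filter_upwards [self_mem_nhdsWithin] with θ hθ
        simpa using sub_pos.2 (mem_Iio.mp hθ)
    have hsin_div : Tendsto (fun u : ℝ => Real.sin u / u) (𝓝[≠] (0:ℝ)) (𝓝 1) := by
      have h := (Real.hasDerivAt_sin 0)
      rw [hasDerivAt_iff_tendsto_slope] at h
      have hsl : slope Real.sin 0 = fun u => Real.sin u / u := by
        funext u; simp [slope_def_field]
      rw [hsl, Real.cos_zero] at h
      exact h
    have hdiv : Tendsto (fun u : ℝ => u / Real.sin u) (𝓝[>] (0:ℝ)) (𝓝 1) := by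
      have h1 : Tendsto (fun u : ℝ => (Real.sin u / u)⁻¹) (𝓝[>] (0:ℝ)) (𝓝 1) := by
        have := (hsin_div.mono_left
          (nhdsWithin_mono _ (fun x (hx : x ∈ Ioi (0:ℝ)) => ne_of_gt hx))).inv₀ one_ne_zero
        simpa using this
      refine h1.congr fun u => ?_
      rw [inv_div]
    have hcos : Tendsto (fun u : ℝ => Real.cos u) (𝓝[>] (0:ℝ)) (𝓝 1) := by
      have := Real.continuous_cos.tendsto 0
      simpa using this.mono_left nhdsWithin_le_nhds
    have hG : Tendsto (fun u : ℝ => u / Real.sin u + Real.cos u) (𝓝[>] (0:ℝ)) (𝓝 2) := by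
      have := hdiv.add hcos
      norm_num at this
      exact this
    rw [hFG]
    exact hG.comp hmap
  have := intervalIntegral.integral_eq_sub_of_hasDerivAt_of_tendsto hab hderiv hint ha hb
  rw [hf] at this
  rw [this]
  ring
end

section
/- ∫₀^{π/2} ((π/2 − θ)·tan θ − sin²θ) dθ = (π/4)(2 log 2 − 1). -/
open Real MeasureTheory Set Filter Topology intervalIntegral

lemma neg_log_le (x : ℝ) (hx : 0 < x) : -Real.log x ≤ 2 * x ^ (-(1:ℝ)/2) := by
  have h1 : 0 < x ^ ((1:ℝ)/2) := Real.rpow_pos_of_pos hx _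
  have h2 : Real.log ((x ^ ((1:ℝ)/2))⁻¹) ≤ (x ^ ((1:ℝ)/2))⁻¹ - 1 :=
    Real.log_le_sub_one_of_pos (by positivity)
  have h3 : Real.log ((x ^ ((1:ℝ)/2))⁻¹) = -(((1:ℝ)/2) * Real.log x) := by
    rw [Real.log_inv, Real.log_rpow hx]
  have h4 : (x ^ ((1:ℝ)/2))⁻¹ = x ^ (-(1:ℝ)/2) := by
    rw [← Real.rpow_neg hx.le]; norm_num
  rw [h3, h4] at h2
  nlinarith [Real.rpow_pos_of_pos hx (-(1:ℝ)/2)]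

lemma logsin_bound {x : ℝ} (hx0 : 0 < x) (hx2 : x ≤ π/2) :
    ‖Real.log (Real.sin x)‖ ≤ Real.log (π/2) + 2 * x ^ (-(1:ℝ)/2) := by
  have hs0 : 0 < Real.sin x :=
    Real.sin_pos_of_pos_of_lt_pi hx0 (lt_of_le_of_lt hx2 (by linarith [Real.pi_pos]))
  have hs1 : Real.sin x ≤ 1 := Real.sin_le_one x
  have hlo : Real.log (2/π * x) ≤ Real.log (Real.sin x) :=
    Real.log_le_log (by positivity) (Real.mul_le_sin hx0.le hx2)
  have hsplit : Real.log (2/π * x) = -Real.log (π/2) + Real.log x := by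
    rw [Real.log_mul (by positivity) hx0.ne', ← Real.log_inv]
    congr 1
    · congr 1; rw [inv_div]
  rw [Real.norm_eq_abs, abs_of_nonpos (Real.log_nonpos hs0.le hs1)]
  have := neg_log_le x hx0
  rw [hsplit] at hlo
  linarith

lemma logsin_integrable : IntervalIntegrable (fun x => Real.log (Real.sin x)) volume 0 (π/2) := by
  have hb : IntervalIntegrable (fun x : ℝ => Real.log (π/2) + 2 * x ^ (-(1:ℝ)/2)) volume 0 (π/2) :=
    intervalIntegrable_const.add ((intervalIntegrable_rpow' (by norm_num)).const_mul 2)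
  refine hb.mono_fun' ?_ ?_
  · exact (Real.measurable_log.comp Real.continuous_sin.measurable).aestronglyMeasurable
  · filter_upwards [ae_restrict_mem measurableSet_uIoc] with x hx
    rw [Set.uIoc_of_le (by positivity : (0:ℝ) ≤ π/2)] at hx
    exact logsin_bound hx.1 hx.2


lemma logsin_int1 : IntervalIntegrable (fun x => Real.log (Real.sin x)) volume 0 (π/4) :=
  logsin_integrable.mono_set' (by
    rw [Set.uIoc_of_le (by positivity : (0:ℝ) ≤ π/4), Set.uIoc_of_le (by positivity : (0:ℝ) ≤ π/2)]
    exact Set.Ioc_subset_Ioc le_rfl (by linarith [Real.pi_pos]))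

lemma logsin_int2 : IntervalIntegrable (fun x => Real.log (Real.sin x)) volume (π/4) (π/2) :=
  logsin_integrable.mono_set' (by
    rw [Set.uIoc_of_le (by linarith [Real.pi_pos] : (π/4:ℝ) ≤ π/2),
      Set.uIoc_of_le (by positivity : (0:ℝ) ≤ π/2)]
    exact Set.Ioc_subset_Ioc (by positivity) le_rfl)

lemma logcos_int1 : IntervalIntegrable (fun x => Real.log (Real.cos x)) volume 0 (π/4) := by
  apply ContinuousOn.intervalIntegrable
  apply ContinuousOn.log (Real.continuous_cos.continuousOn)
  intro x hx
  rw [Set.uIcc_of_le (by positivity : (0:ℝ) ≤ π/4)] at hx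
  have : 0 < Real.cos x := Real.cos_pos_of_mem_Ioo
    ⟨by linarith [hx.1, Real.pi_pos], by linarith [hx.2, Real.pi_pos]⟩
  exact this.ne'

lemma logsin_integral : ∫ x in (0:ℝ)..(π/2), Real.log (Real.sin x) = -(π/2) * Real.log 2 := by
  set J := ∫ x in (0:ℝ)..(π/2), Real.log (Real.sin x) with hJ
  have hsplit : (∫ x in (0:ℝ)..(π/4), Real.log (Real.sin x))
      + ∫ x in (π/4:ℝ)..(π/2), Real.log (Real.sin x) = J :=
    integral_add_adjacent_intervals logsin_int1 logsin_int2
  have hrefl : (∫ x in (π/4:ℝ)..(π/2), Real.log (Real.sin x))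
      = ∫ x in (0:ℝ)..(π/4), Real.log (Real.cos x) := by
    have := intervalIntegral.integral_comp_sub_left
      (a := 0) (b := π/4) (fun x => Real.log (Real.sin x)) (π/2)
    simp only [Real.sin_pi_div_two_sub] at this
    rw [show π/2 - π/4 = π/4 by ring, sub_zero] at this
    exact this.symm
  have hdup : (∫ x in (0:ℝ)..(π/4), (Real.log (Real.sin x) + Real.log (Real.cos x)))
      = J / 2 - (π/4) * Real.log 2 := by
    have h1 : (∫ x in (0:ℝ)..(π/4), (Real.log (Real.sin x) + Real.log (Real.cos x)))
        = ∫ x in (0:ℝ)..(π/4), (Real.log (Real.sin (2*x)) - Real.log 2) := by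
      apply intervalIntegral.integral_congr_ae
      filter_upwards with x hx
      rw [Set.uIoc_of_le (by positivity : (0:ℝ) ≤ π/4)] at hx
      have hs : 0 < Real.sin x := Real.sin_pos_of_pos_of_lt_pi hx.1
        (by linarith [hx.2, Real.pi_pos])
      have hc : 0 < Real.cos x := Real.cos_pos_of_mem_Ioo
        ⟨by linarith [hx.1, Real.pi_pos], by linarith [hx.2, Real.pi_pos]⟩
      rw [Real.sin_two_mul, Real.log_mul (by positivity) hc.ne',
        Real.log_mul (by norm_num) hs.ne']
      ring
    have h2 : (∫ x in (0:ℝ)..(π/4), Real.log (Real.sin (2*x))) = J / 2 := by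
      have := intervalIntegral.integral_comp_mul_left
        (a := 0) (b := π/4) (fun x => Real.log (Real.sin x)) (c := 2) (by norm_num)
      rw [this]
      norm_num [hJ]
      ring
    have hint2x : IntervalIntegrable (fun x => Real.log (Real.sin (2*x))) volume 0 (π/4) := by
      have := logsin_integrable.comp_mul_left (c := 2)
      rw [show (π:ℝ)/4 = π/2/2 by ring]
      simpa using this
    rw [h1, intervalIntegral.integral_sub hint2x intervalIntegrable_const, h2]
    simp
  have : J = J / 2 - (π/4) * Real.log 2 := by
    rw [← hdup, ← hsplit, hrefl,
      ← intervalIntegral.integral_add logsin_int1 logcos_int1]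
  linarith

lemma tan_measurable : Measurable Real.tan := by
  have : Real.tan = fun x => Real.sin x / Real.cos x :=
    funext fun x => Real.tan_eq_sin_div_cos x
  rw [this]
  exact Real.measurable_sin.div Real.measurable_cos

lemma wtan_bound {x : ℝ} (hx0 : 0 < x) (hx2 : x < π/2) :
    0 ≤ (π/2 - x) * Real.tan x ∧ (π/2 - x) * Real.tan x ≤ 1 := by
  have ht : 0 < Real.tan x := Real.tan_pos_of_pos_of_lt_pi_div_two hx0 hx2
  have h1 : π/2 - x < Real.tan (π/2 - x) := Real.lt_tan (by linarith) (by linarith)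
  rw [Real.tan_pi_div_two_sub] at h1
  refine ⟨by nlinarith, ?_⟩
  have h2 : (π/2 - x) * Real.tan x < (Real.tan x)⁻¹ * Real.tan x := by
    exact mul_lt_mul_of_pos_right h1 ht
  rw [inv_mul_cancel₀ ht.ne'] at h2
  linarith

lemma integrand_integrable :
    IntervalIntegrable (fun θ => (π/2 - θ) * Real.tan θ - (Real.sin θ)^2) volume 0 (π/2) := by
  refine (_root_.intervalIntegrable_const (c := (2:ℝ))).mono_fun' ?_ ?_
  · exact (((measurable_const.sub measurable_id).mul tan_measurable).sub
      ((Real.measurable_sin.pow_const 2))).aestronglyMeasurable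
  · filter_upwards [ae_restrict_mem measurableSet_uIoc] with x hx
    rw [Set.uIoc_of_le (by positivity : (0:ℝ) ≤ π/2)] at hx
    rcases lt_or_eq_of_le hx.2 with h | h
    · obtain ⟨h0, h1⟩ := wtan_bound hx.1 h
      have hs := Real.sin_sq_le_one x
      have hs0 := sq_nonneg (Real.sin x)
      rw [Real.norm_eq_abs, abs_le]
      constructor <;> nlinarith
    · rw [h]
      norm_num [Real.tan_pi_div_two]

lemma logcos_integrable : IntervalIntegrable (fun x => Real.log (Real.cos x)) volume 0 (π/2) := by
  have := logsin_integrable.comp_sub_left (π/2)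
  simp only [Real.sin_pi_div_two_sub, sub_zero, sub_self] at this
  exact this.symm

lemma logcos_integral : ∫ x in (0:ℝ)..(π/2), Real.log (Real.cos x) = -(π/2) * Real.log 2 := by
  have := intervalIntegral.integral_comp_sub_left
    (a := 0) (b := π/2) (fun x => Real.log (Real.sin x)) (π/2)
  simp only [Real.sin_pi_div_two_sub, sub_zero, sub_self] at this
  rw [this, logsin_integral]

noncomputable def Faux (θ : ℝ) : ℝ := -((π/2 - θ) * Real.log (Real.cos θ))

lemma Faux_deriv {x : ℝ} (hx : x ∈ Set.Ioo 0 (π/2)) :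
    HasDerivAt Faux (Real.log (Real.cos x) + (π/2 - x) * Real.tan x) x := by
  have hc : 0 < Real.cos x := Real.cos_pos_of_mem_Ioo
    ⟨by linarith [hx.1, Real.pi_pos], hx.2⟩
  have h1 : HasDerivAt (fun θ : ℝ => π/2 - θ) (-1) x := (hasDerivAt_id x).const_sub (π/2)
  have h2 : HasDerivAt (fun θ : ℝ => Real.log (Real.cos θ))
      ((Real.cos x)⁻¹ * -Real.sin x) x :=
    (Real.hasDerivAt_log hc.ne').comp x (Real.hasDerivAt_cos x)
  have h3 : HasDerivAt (fun θ : ℝ => -((π/2 - θ) * Real.log (Real.cos θ))) _ x := (h1.mul h2).neg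
  convert h3 using 1
  · rfl
  rw [Real.tan_eq_sin_div_cos]
  field_simp
  ring

lemma tend_u : Tendsto (fun u => u * Real.log (Real.sin u)) (𝓝[>] (0:ℝ)) (𝓝 0) := by
  have hmem : Set.Ioo (0:ℝ) 1 ∈ 𝓝[>] (0:ℝ) :=
    Ioo_mem_nhdsGT_of_mem ⟨le_rfl, by norm_num⟩
  have hlow : Tendsto (fun u : ℝ => u * Real.log u + u * Real.log (2/π)) (𝓝[>] (0:ℝ)) (𝓝 0) := by
    have t1 : Tendsto (fun u : ℝ => u * Real.log u) (𝓝 (0:ℝ)) (𝓝 0) := by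
      have := Real.continuous_mul_log.tendsto 0
      simpa using this
    have t2 : Tendsto (fun u : ℝ => u * Real.log (2/π)) (𝓝 (0:ℝ)) (𝓝 0) := by
      have : Tendsto (fun u : ℝ => u * Real.log (2/π)) (𝓝 0) (𝓝 (0 * Real.log (2/π))) :=
        (continuous_id'.mul (continuous_const (y := Real.log (2/π)))).tendsto (0:ℝ)
      simpa using this
    have := t1.add t2
    simpa using this.mono_left nhdsWithin_le_nhds
  have hup : Tendsto (fun u : ℝ => u * Real.log u) (𝓝[>] (0:ℝ)) (𝓝 0) := by
    have := Real.continuous_mul_log.tendsto 0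
    simpa using this.mono_left nhdsWithin_le_nhds
  refine tendsto_of_tendsto_of_tendsto_of_le_of_le' hlow hup ?_ ?_
  · filter_upwards [hmem] with u hu
    have hpi : (1:ℝ) < π/2 := by linarith [Real.pi_gt_three]
    have hs : 0 < Real.sin u := Real.sin_pos_of_pos_of_lt_pi hu.1
      (by linarith [Real.pi_gt_three, hu.2])
    have hlo : Real.log (2/π * u) ≤ Real.log (Real.sin u) :=
      Real.log_le_log (mul_pos (by positivity) hu.1)
        (Real.mul_le_sin hu.1.le (by linarith [hu.2]))
    rw [Real.log_mul (by positivity) hu.1.ne'] at hlo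
    have := mul_le_mul_of_nonneg_left hlo hu.1.le
    linarith [this]
  · filter_upwards [hmem] with u hu
    have hs : 0 < Real.sin u := Real.sin_pos_of_pos_of_lt_pi hu.1
      (by linarith [Real.pi_gt_three, hu.2])
    have hle : Real.log (Real.sin u) ≤ Real.log u :=
      Real.log_le_log hs (Real.sin_le hu.1.le)
    exact mul_le_mul_of_nonneg_left hle hu.1.le

lemma Faux_tendsto_top : Tendsto Faux (𝓝[<] (π/2)) (𝓝 0) := by
  have hmap : Tendsto (fun θ : ℝ => π/2 - θ) (𝓝[<] (π/2)) (𝓝[>] (0:ℝ)) := by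
    apply tendsto_nhdsWithin_of_tendsto_nhds_of_eventually_within
    · have : Tendsto (fun θ : ℝ => π/2 - θ) (𝓝 (π/2)) (𝓝 (π/2 - π/2)) :=
        (continuous_const.sub continuous_id).tendsto _
      simpa using this.mono_left nhdsWithin_le_nhds
    · filter_upwards [self_mem_nhdsWithin] with θ hθ
      exact sub_pos.mpr (Set.mem_Iio.mp hθ)
  have := (tend_u.neg.comp hmap)
  simp only [neg_zero] at this
  apply this.congr
  intro θ
  simp [Faux, Real.sin_pi_div_two_sub, Function.comp]

lemma Faux_tendsto_bot : Tendsto Faux (𝓝[>] (0:ℝ)) (𝓝 0) := by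
  have hc : ContinuousAt Faux 0 := by
    apply ContinuousAt.neg
    apply ContinuousAt.mul (by fun_prop)
    exact (Real.continuousAt_log (by simp)).comp (Real.continuous_cos.continuousAt)
  have : Faux 0 = 0 := by simp [Faux]
  simpa [this] using (hc.tendsto.mono_left nhdsWithin_le_nhds)

lemma g_integrable : IntervalIntegrable
    (fun x => Real.log (Real.cos x) + (π/2 - x) * Real.tan x) volume 0 (π/2) := by
  have e : (fun x => Real.log (Real.cos x) + (π/2 - x) * Real.tan x)
      = fun x => ((π/2 - x) * Real.tan x - (Real.sin x)^2)
          + (Real.log (Real.cos x) + (Real.sin x)^2) := by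
    funext x; ring
  rw [e]
  exact integrand_integrable.add (logcos_integrable.add
    ((Real.continuous_sin.pow 2).intervalIntegrable _ _))

lemma g_integral :
    ∫ x in (0:ℝ)..(π/2), (Real.log (Real.cos x) + (π/2 - x) * Real.tan x) = 0 := by
  have := intervalIntegral.integral_eq_sub_of_hasDerivAt_of_tendsto
    (f := Faux) (f' := fun x => Real.log (Real.cos x) + (π/2 - x) * Real.tan x)
    (by positivity : (0:ℝ) < π/2) (fun x hx => Faux_deriv hx) g_integrable
    Faux_tendsto_bot Faux_tendsto_top
  simpa using this

theorem integral_aux3 :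
    ∫ θ in (0:ℝ)..(π/2), ((π/2 - θ) * Real.tan θ - (Real.sin θ)^2)
      = (π/4) * (2 * Real.log 2 - 1) := by
  have e : (fun θ => (π/2 - θ) * Real.tan θ - (Real.sin θ)^2)
      = fun θ => (Real.log (Real.cos θ) + (π/2 - θ) * Real.tan θ)
          - (Real.log (Real.cos θ) + (Real.sin θ)^2) := by
    funext θ; ring
  have hsin2 : IntervalIntegrable (fun θ : ℝ => (Real.sin θ)^2) volume 0 (π/2) :=
    (Real.continuous_sin.pow 2).intervalIntegrable _ _
  rw [e, intervalIntegral.integral_sub g_integrable (logcos_integrable.add hsin2),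
    g_integral, intervalIntegral.integral_add logcos_integrable hsin2, logcos_integral,
    integral_sin_sq]
  simp
  ring
end
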